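/- For a Hermitian operator X on C^K ⊗ C^M, the product numerical range Λ⊗(X) is a convex subset of the real line (an interval). -/

import Mathlib

open Matrix Complex Kronecker Pointwise

/-- The Kronecker (tensor) product of two vectors. -/
def prodVec {K M : ℕ} (x : Fin K → ℂ) (y : Fin M → ℂ) : Fin K × Fin M → ℂ :=
  fun p => x p.1 * y p.2

/-- The product numerical range of an operator on `ℂ^K ⊗ ℂ^M`. -/
def pnr {K M : ℕ} (X : Matrix (Fin K × Fin M) (Fin K × Fin M) ℂ) : Set ℂ :=
  {z | ∃ (x : Fin K → ℂ) (y : Fin M → ℂ),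
    star x ⬝ᵥ x = 1 ∧ star y ⬝ᵥ y = 1 ∧
    star (prodVec x y) ⬝ᵥ X.mulVec (prodVec x y) = z}

/-- The numerical range of an operator on `ℂ^N`. -/
def nr {N : ℕ} (A : Matrix (Fin N) (Fin N) ℂ) : Set ℂ :=
  {z | ∃ x : Fin N → ℂ, star x ⬝ᵥ x = 1 ∧ star x ⬝ᵥ A.mulVec x = z}

lemma herm_quad_im {n : Type*} [Fintype n] (A : Matrix n n ℂ) (hA : A.IsHermitian)
    (v : n → ℂ) : (star v ⬝ᵥ A.mulVec v).im = 0 := by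
  have key : star (star v ⬝ᵥ A.mulVec v) = star v ⬝ᵥ A.mulVec v := by
    rw [← Matrix.star_dotProduct, Matrix.star_mulVec, hA.eq, ← Matrix.dotProduct_mulVec]
  exact Complex.conj_eq_iff_im.mp key

lemma sphere_mem_iff {n : ℕ} (x : EuclideanSpace ℂ (Fin n)) :
    x ∈ Metric.sphere (0 : EuclideanSpace ℂ (Fin n)) 1 ↔
      star (x : Fin n → ℂ) ⬝ᵥ (x : Fin n → ℂ) = 1 := by
  have h : (inner ℂ x x : ℂ) = star (x : Fin n → ℂ) ⬝ᵥ (x : Fin n → ℂ) := by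
    rw [EuclideanSpace.inner_eq_star_dotProduct x x, dotProduct_comm]
  have h2 : (inner ℂ x x : ℂ) = ((‖x‖ : ℂ)) ^ 2 := inner_self_eq_norm_sq_to_K x
  rw [mem_sphere_zero_iff_norm, ← h, h2]
  constructor
  · intro hx; rw [hx]; norm_num
  · intro hx
    have : (‖x‖ : ℝ) ^ 2 = 1 := by exact_mod_cast hx
    nlinarith [norm_nonneg x]

lemma one_lt_rank_euclid {n : ℕ} (hn : 0 < n) :
    1 < Module.rank ℝ (EuclideanSpace ℂ (Fin n)) := by
  have hfr : Module.finrank ℝ (EuclideanSpace ℂ (Fin n)) = 2 * n := by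
    have := Module.finrank_mul_finrank ℝ ℂ (EuclideanSpace ℂ (Fin n))
    rw [Complex.finrank_real_complex, finrank_euclideanSpace_fin] at this
    omega
  rw [← Module.finrank_eq_rank, hfr]
  exact_mod_cast (by omega : 1 < 2 * n)

theorem pnr_hermitian_convex_real {K M : ℕ}
    (X : Matrix (Fin K × Fin M) (Fin K × Fin M) ℂ) (hX : X.IsHermitian) :
    (∀ z ∈ pnr X, z.im = 0) ∧ Convex ℝ (pnr X) := by
  have hreal : ∀ z ∈ pnr X, z.im = 0 := by
    rintro z ⟨x, y, hx, hy, rfl⟩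
    exact herm_quad_im X hX _
  refine ⟨hreal, ?_⟩
  by_cases hK : K = 0
  · have : pnr X = ∅ := by
      ext z
      simp only [pnr, Set.mem_setOf_eq, Set.mem_empty_iff_false, iff_false]
      rintro ⟨x, y, hx, -, -⟩
      subst hK
      simp [dotProduct] at hx
    rw [this]; exact convex_empty
  by_cases hM : M = 0
  · have : pnr X = ∅ := by
      ext z
      simp only [pnr, Set.mem_setOf_eq, Set.mem_empty_iff_false, iff_false]
      rintro ⟨x, y, -, hy, -⟩
      subst hM
      simp [dotProduct] at hy
    rw [this]; exact convex_empty
  -- main case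
  have hconn : IsPreconnected (pnr X) := by
    have himg : pnr X =
        (fun p : (EuclideanSpace ℂ (Fin K)) × (EuclideanSpace ℂ (Fin M)) =>
          star (prodVec (p.1 : Fin K → ℂ) (p.2 : Fin M → ℂ)) ⬝ᵥ
            X.mulVec (prodVec (p.1 : Fin K → ℂ) (p.2 : Fin M → ℂ))) ''
          ((Metric.sphere 0 1) ×ˢ (Metric.sphere 0 1)) := by
      ext z
      constructor
      · rintro ⟨x, y, hx, hy, rfl⟩
        exact ⟨((WithLp.equiv 2 _).symm x, (WithLp.equiv 2 _).symm y),
          ⟨(sphere_mem_iff _).2 hx, (sphere_mem_iff _).2 hy⟩, rfl⟩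
      · rintro ⟨⟨x, y⟩, ⟨hx, hy⟩, rfl⟩
        exact ⟨x, y, (sphere_mem_iff x).1 hx, (sphere_mem_iff y).1 hy, rfl⟩
    rw [himg]
    have hcont : Continuous
        (fun p : (EuclideanSpace ℂ (Fin K)) × (EuclideanSpace ℂ (Fin M)) =>
          star (prodVec (p.1 : Fin K → ℂ) (p.2 : Fin M → ℂ)) ⬝ᵥ
            X.mulVec (prodVec (p.1 : Fin K → ℂ) (p.2 : Fin M → ℂ))) := by
      simp only [dotProduct, Matrix.mulVec, prodVec, Pi.star_apply]
      fun_prop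
    have hsK := isConnected_sphere (one_lt_rank_euclid (Nat.pos_of_ne_zero hK))
      (0 : EuclideanSpace ℂ (Fin K)) zero_le_one
    have hsM := isConnected_sphere (one_lt_rank_euclid (Nat.pos_of_ne_zero hM))
      (0 : EuclideanSpace ℂ (Fin M)) zero_le_one
    exact ((hsK.prod hsM).image _ hcont.continuousOn).isPreconnected
  have hT : Convex ℝ (Complex.re '' pnr X) := by
    rw [convex_iff_ordConnected]
    exact (hconn.image _ Complex.continuous_re.continuousOn).ordConnected
  have himg : pnr X = (Complex.ofRealCLM.toLinearMap : ℝ →ₗ[ℝ] ℂ) '' (Complex.re '' pnr X) := by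
    ext z
    constructor
    · intro hz
      exact ⟨z.re, ⟨z, hz, rfl⟩, Complex.ext rfl (hreal z hz).symm⟩
    · rintro ⟨r, ⟨w, hw, rfl⟩, rfl⟩
      have hw2 : ((w.re : ℂ)) = w := Complex.ext rfl (hreal w hw).symm
      simpa [Complex.ofRealCLM_apply, hw2] using hw
  rw [himg]
  exact hT.linear_image _
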